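/- Let L ≥ 2 be an integer. Define h : ℝ → ℝ by h(x) = 1 − max{0, 1−3x} − max{0, 3x−1} + max{0, 6x−4}, and let g be the L²-fold composition g = h ∘ h ∘ ⋯ ∘ h (L² times). Then g is computed by a ReLU network with L² hidden layers each of width 3 whose coefficients all have absolute value at most 6, and for every function f : ℝ → ℝ computed by a ReLU network with input dimension 1, output dimension 1, and L hidden layers each of width strictly less than 3^{L−1} − 1, one has ∫_0^1 |f(x) − g(x)| dx ≥ 1/9. -/

import Mathlib

open scoped BigOperators
open MeasureTheory

noncomputable section

/-- The ReLU activation function. -/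
def relu (x : ℝ) : ℝ := max x 0

/-- `f : ℝ^n → ℝ^m` is an affine map. -/
def IsAffineMap {n m : ℕ} (f : (Fin n → ℝ) → Fin m → ℝ) : Prop :=
  ∃ (A : Matrix (Fin m) (Fin n) ℝ) (b : Fin m → ℝ),
    ∀ x i, f x i = (∑ j, A i j * x j) + b i

/-- `f : ℝ^n → ℝ^m` is an affine map all of whose coefficients have absolute value ≤ c. -/
def IsAffineMapB (c : ℝ) {n m : ℕ} (f : (Fin n → ℝ) → Fin m → ℝ) : Prop :=
  ∃ (A : Matrix (Fin m) (Fin n) ℝ) (b : Fin m → ℝ),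
    (∀ i j, |A i j| ≤ c) ∧ (∀ i, |b i| ≤ c) ∧ ∀ x i, f x i = (∑ j, A i j * x j) + b i

/-- `ComputesA ρ n hidden m f` : `f` is computed by a feedforward network with activation
function `ρ`, input dimension `n`, hidden layer widths `hidden` and output dimension `m`. -/
inductive ComputesA (ρ : ℝ → ℝ) :
    ∀ (n : ℕ), List ℕ → ∀ (m : ℕ), ((Fin n → ℝ) → Fin m → ℝ) → Prop
  | nil {n m : ℕ} (f : (Fin n → ℝ) → Fin m → ℝ) (hf : IsAffineMap f) :
      ComputesA ρ n [] m f
  | cons {n w m : ℕ} {ws : List ℕ} (f₀ : (Fin n → ℝ) → Fin w → ℝ)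
      (g : (Fin w → ℝ) → Fin m → ℝ) (hf : IsAffineMap f₀)
      (hg : ComputesA ρ w ws m g) :
      ComputesA ρ n (w :: ws) m (fun x => g (fun i => ρ (f₀ x i)))

/-- Same as `ComputesA` but all coefficients of all affine maps are bounded by `c`. -/
inductive ComputesAB (ρ : ℝ → ℝ) (c : ℝ) :
    ∀ (n : ℕ), List ℕ → ∀ (m : ℕ), ((Fin n → ℝ) → Fin m → ℝ) → Prop
  | nil {n m : ℕ} (f : (Fin n → ℝ) → Fin m → ℝ) (hf : IsAffineMapB c f) :
      ComputesAB ρ c n [] m f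
  | cons {n w m : ℕ} {ws : List ℕ} (f₀ : (Fin n → ℝ) → Fin w → ℝ)
      (g : (Fin w → ℝ) → Fin m → ℝ) (hf : IsAffineMapB c f₀)
      (hg : ComputesAB ρ c w ws m g) :
      ComputesAB ρ c n (w :: ws) m (fun x => g (fun i => ρ (f₀ x i)))

/-- `f` is computed by a ReLU network of design `(n, hidden…, m)`. -/
def Computes (n : ℕ) (hidden : List ℕ) (m : ℕ) (f : (Fin n → ℝ) → Fin m → ℝ) : Prop :=
  ComputesA relu n hidden m f

/-- `R` is a linear region of `f` : an open connected set on which `f` is affine,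
maximal in the sense that `f` is not affine on any strictly larger open set. -/
def IsLinearRegion {n m : ℕ} (f : (Fin n → ℝ) → Fin m → ℝ) (R : Set (Fin n → ℝ)) : Prop :=
  IsOpen R ∧ IsConnected R ∧ (∃ g, IsAffineMap g ∧ Set.EqOn f g R) ∧
    ∀ R' : Set (Fin n → ℝ), IsOpen R' → R ⊂ R' →
      ¬ ∃ g, IsAffineMap g ∧ Set.EqOn f g R'

/-- The number of linear regions of `f`. -/
def numRegions {n m : ℕ} (f : (Fin n → ℝ) → Fin m → ℝ) : ℕ :=
  {R | IsLinearRegion f R}.ncard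

/-- `R(n, hidden…, m)` : the maximal number of linear regions of a function computed by a
ReLU network of design `(n, hidden…, m)`. -/
def maxRegions (n : ℕ) (hidden : List ℕ) (m : ℕ) : ℕ :=
  sSup {k | ∃ f : (Fin n → ℝ) → Fin m → ℝ, Computes n hidden m f ∧ numRegions f = k}

/-- `f` is piecewise affine: continuous, finitely many linear regions, whose closures cover. -/
def IsPiecewiseAffine {n m : ℕ} (f : (Fin n → ℝ) → Fin m → ℝ) : Prop :=
  Continuous f ∧ {R | IsLinearRegion f R}.Finite ∧
    (⋃ R ∈ {R | IsLinearRegion f R}, closure R) = Set.univ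

/-- The sawtooth-type function `h(x) = 1 - max{0,1-3x} - max{0,3x-1} + max{0,6x-4}`. -/
def hfun (x : ℝ) : ℝ := 1 - max 0 (1 - 3 * x) - max 0 (3 * x - 1) + max 0 (6 * x - 4)

lemma hfun_lo {y : ℝ} (h0 : 0 ≤ y) (h1 : y ≤ 1/3) : hfun y = 3 * y := by
  unfold hfun
  rw [max_eq_right (by linarith), max_eq_left (by linarith), max_eq_left (by linarith)]
  ring

lemma hfun_mid {y : ℝ} (h0 : 1/3 ≤ y) (h1 : y ≤ 2/3) : hfun y = 2 - 3 * y := by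
  unfold hfun
  rw [max_eq_left (by linarith), max_eq_right (by linarith), max_eq_left (by linarith)]
  ring

lemma hfun_hi {y : ℝ} (h0 : 2/3 ≤ y) (h1 : y ≤ 1) : hfun y = 3 * y - 2 := by
  unfold hfun
  rw [max_eq_left (by linarith), max_eq_right (by linarith), max_eq_right (by linarith)]
  ring

set_option maxHeartbeats 1000000 in
lemma hfun_iter (K : ℕ) (j : ℕ) (hj : j < 3^K) (x : ℝ)
    (h1 : (j : ℝ)/3^K ≤ x) (h2 : x ≤ ((j:ℝ)+1)/3^K) :
    hfun^[K] x = if Even j then 3^K * x - j else ((j:ℝ)+1) - 3^K * x := by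
  induction K generalizing j x with
  | zero =>
      have hj0 : j = 0 := by omega
      subst hj0
      norm_num at h1 h2 ⊢
  | succ K ih =>
      have hP : (0:ℝ) < 3^K := by positivity
      have hP' : (0:ℝ) < 3^(K+1) := by positivity
      have h3 : (3:ℝ)^(K+1) = 3 * 3^K := by ring
      obtain ⟨q, r, hr, hjqr⟩ : ∃ q r, r < 3 ∧ j = 3*q + r :=
        ⟨j/3, j%3, Nat.mod_lt _ (by norm_num), by omega⟩
      have hq : q < 3^K := by
        have : 3^(K+1) = 3*3^K := by ring
        omega
      have hx1' : (j:ℝ) ≤ x * 3^(K+1) := (div_le_iff₀ hP').mp h1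
      have hx2' : x * 3^(K+1) ≤ (j:ℝ) + 1 := (le_div_iff₀ hP').mp h2
      rw [h3] at hx1' hx2'
      have hjr : (j:ℝ) = 3*(q:ℝ) + r := by push_cast [hjqr]; ring
      have hrR : (r:ℝ) ≤ 2 := by exact_mod_cast Nat.lt_succ_iff.mp hr
      have hr0 : (0:ℝ) ≤ r := Nat.cast_nonneg r
      have hx1 : (q:ℝ)/3^K ≤ x := by
        rw [div_le_iff₀ hP]; nlinarith
      have hx2 : x ≤ ((q:ℝ)+1)/3^K := by
        rw [le_div_iff₀ hP]; nlinarith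
      have hy := ih q hq x hx1 hx2
      rw [Function.iterate_succ_apply', hy]
      rcases Nat.even_or_odd q with hqe | hqo
      · rw [if_pos hqe]
        interval_cases r
        · have hje : Even j := by rcases hqe with ⟨t, ht⟩; exact ⟨3*t, by omega⟩
          have hb1 : (0:ℝ) ≤ 3^K * x - q := by push_cast at hjr; nlinarith
          have hb2 : 3^K * x - (q:ℝ) ≤ 1/3 := by push_cast at hjr; nlinarith
          rw [if_pos hje, hfun_lo hb1 hb2, h3, hjr]; ring
        · have hjo : ¬ Even j := by
            rcases hqe with ⟨t, ht⟩; intro ⟨u, hu⟩; omega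
          have hb1 : (1:ℝ)/3 ≤ 3^K * x - q := by push_cast at hjr; nlinarith
          have hb2 : 3^K * x - (q:ℝ) ≤ 2/3 := by push_cast at hjr; nlinarith
          rw [if_neg hjo, hfun_mid hb1 hb2, h3, hjr]; ring
        · have hje : Even j := by rcases hqe with ⟨t, ht⟩; exact ⟨3*t+1, by omega⟩
          have hb1 : (2:ℝ)/3 ≤ 3^K * x - q := by push_cast at hjr; nlinarith
          have hb2 : 3^K * x - (q:ℝ) ≤ 1 := by push_cast at hjr; nlinarith
          rw [if_pos hje, hfun_hi hb1 hb2, h3, hjr]; ring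
      · rw [if_neg (by simpa using Nat.not_even_iff_odd.mpr hqo)]
        interval_cases r
        · have hjo : ¬ Even j := by
            rcases hqo with ⟨t, ht⟩; intro ⟨u, hu⟩; omega
          have hb1 : (2:ℝ)/3 ≤ (q:ℝ) + 1 - 3^K * x := by push_cast at hjr; nlinarith
          have hb2 : (q:ℝ) + 1 - 3^K * x ≤ 1 := by push_cast at hjr; nlinarith
          rw [if_neg hjo, hfun_hi hb1 hb2, h3, hjr]; ring
        · have hje : Even j := by rcases hqo with ⟨t, ht⟩; exact ⟨3*t+2, by omega⟩
          have hb1 : (1:ℝ)/3 ≤ (q:ℝ) + 1 - 3^K * x := by push_cast at hjr; nlinarith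
          have hb2 : (q:ℝ) + 1 - 3^K * x ≤ 2/3 := by push_cast at hjr; nlinarith
          rw [if_pos hje, hfun_mid hb1 hb2, h3, hjr]; ring
        · have hjo : ¬ Even j := by
            rcases hqo with ⟨t, ht⟩; intro ⟨u, hu⟩; omega
          have hb1 : (0:ℝ) ≤ (q:ℝ) + 1 - 3^K * x := by push_cast at hjr; nlinarith
          have hb2 : (q:ℝ) + 1 - 3^K * x ≤ 1/3 := by push_cast at hjr; nlinarith
          rw [if_neg hjo, hfun_lo hb1 hb2, h3, hjr]; ring
lemma relu_comb (y : ℝ) :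
    1 - relu (1 - 3*y) - relu (3*y - 1) + relu (6*y - 4) = hfun y := by
  simp only [relu, hfun, max_comm]

lemma inner_net (K : ℕ) : ∃ g : (Fin 3 → ℝ) → Fin 1 → ℝ,
    ComputesAB relu 6 3 (List.replicate K 3) 1 g ∧
    ∀ v : Fin 3 → ℝ, g v 0 = hfun^[K] (1 - v 0 - v 1 + v 2) := by
  induction K with
  | zero =>
    refine ⟨fun v _ => (∑ j, (!![-1,-1,1] : Matrix (Fin 1) (Fin 3) ℝ) 0 j * v j) + 1,
      ComputesAB.nil _ ⟨!![-1,-1,1], ![1], ?_, ?_, ?_⟩, ?_⟩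
    · intro i j; fin_cases i <;> fin_cases j <;> norm_num
    · intro i; fin_cases i <;> norm_num
    · intro x i; fin_cases i; simp
    · intro v; simp [Fin.sum_univ_three]; ring
  | succ K ih =>
    obtain ⟨g, hg, hgv⟩ := ih
    set A : Matrix (Fin 3) (Fin 3) ℝ := !![3,3,-3; -3,-3,3; -6,-6,6] with hA
    set b : Fin 3 → ℝ := ![-2, 2, 2] with hb
    set f₀ : (Fin 3 → ℝ) → Fin 3 → ℝ := fun v i => (∑ j, A i j * v j) + b i with hf₀
    refine ⟨fun x => g (fun i => relu (f₀ x i)),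
      ComputesAB.cons f₀ g ⟨A, b, ?_, ?_, fun _ _ => rfl⟩ hg, ?_⟩
    · intro i j; fin_cases i <;> fin_cases j <;> norm_num [hA]
    · intro i; fin_cases i <;> norm_num [hb]
    · intro v
      show g (fun i => relu (f₀ v i)) 0 = _
      rw [hgv, Function.iterate_succ_apply]
      have e0 : f₀ v 0 = 1 - 3*(1 - v 0 - v 1 + v 2) := by
        simp [hf₀, hA, hb, Fin.sum_univ_three]; ring
      have e1 : f₀ v 1 = 3*(1 - v 0 - v 1 + v 2) - 1 := by
        simp [hf₀, hA, hb, Fin.sum_univ_three]; ring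
      have e2 : f₀ v 2 = 6*(1 - v 0 - v 1 + v 2) - 4 := by
        simp [hf₀, hA, hb, Fin.sum_univ_three]; ring
      rw [e0, e1, e2, relu_comb]

lemma outer_net (K : ℕ) (hK : 1 ≤ K) : ∃ G : (Fin 1 → ℝ) → Fin 1 → ℝ,
    ComputesAB relu 6 1 (List.replicate K 3) 1 G ∧
    ∀ x : ℝ, G (fun _ => x) 0 = hfun^[K] x := by
  obtain ⟨K', rfl⟩ : ∃ K', K = K' + 1 := ⟨K-1, by omega⟩
  obtain ⟨g, hg, hgv⟩ := inner_net K'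
  set A : Matrix (Fin 3) (Fin 1) ℝ := !![-3; 3; 6] with hA
  set b : Fin 3 → ℝ := ![1, -1, -4] with hb
  set f₀ : (Fin 1 → ℝ) → Fin 3 → ℝ := fun x i => (∑ j, A i j * x j) + b i with hf₀
  refine ⟨fun x => g (fun i => relu (f₀ x i)), ?_, ?_⟩
  · rw [List.replicate_succ]
    refine ComputesAB.cons f₀ g ⟨A, b, ?_, ?_, fun _ _ => rfl⟩ hg
    · intro i j; fin_cases i <;> fin_cases j <;> norm_num [hA]
    · intro i; fin_cases i <;> norm_num [hb]
  · intro x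
    show g (fun i => relu (f₀ (fun _ => x) i)) 0 = _
    rw [hgv, Function.iterate_succ_apply]
    have e0 : f₀ (fun _ => x) 0 = 1 - 3*x := by
      simp [hf₀, hA, hb, Fin.sum_univ_one]; ring
    have e1 : f₀ (fun _ => x) 1 = 3*x - 1 := by
      simp [hf₀, hA, hb, Fin.sum_univ_one]; ring
    have e2 : f₀ (fun _ => x) 2 = 6*x - 4 := by
      simp [hf₀, hA, hb, Fin.sum_univ_one]; ring
    rw [e0, e1, e2, relu_comb]
lemma relu_of_nonneg {t : ℝ} (h : 0 ≤ t) : relu t = t := max_eq_left h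
lemma relu_of_nonpos {t : ℝ} (h : t ≤ 0) : relu t = 0 := max_eq_right h

/-- `f` is affine on every open interval disjoint from `S`. -/
def PWS (S : Set ℝ) (f : ℝ → ℝ) : Prop :=
  ∀ a b : ℝ, Set.Ioo a b ∩ S = ∅ → ∃ c d : ℝ, ∀ x ∈ Set.Ioo a b, f x = c * x + d

lemma PWS.mono {S S' : Set ℝ} {f : ℝ → ℝ} (h : PWS S f) (hs : S ⊆ S') : PWS S' f := by
  intro a b hab
  refine h a b ?_
  rw [Set.eq_empty_iff_forall_notMem] at hab ⊢
  exact fun x hx => hab x ⟨hx.1, hs hx.2⟩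

lemma PWS.affine_comb {S : Set ℝ} {n : ℕ} {γ : ℝ → Fin n → ℝ}
    (hγ : ∀ j, PWS S (fun t => γ t j)) (co : Fin n → ℝ) (b : ℝ) :
    PWS S (fun t => (∑ j, co j * γ t j) + b) := by
  intro a p hap
  choose c d hc using fun j => hγ j a p hap
  refine ⟨∑ j, co j * c j, (∑ j, co j * d j) + b, fun x hx => ?_⟩
  have h1 : ∀ j ∈ Finset.univ, co j * γ x j = co j * c j * x + co j * d j := by
    intro j _
    have h2 : γ x j = c j * x + d j := hc j x hx
    rw [h2]; ring
  show (∑ j, co j * γ x j) + b = _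
  rw [Finset.sum_congr rfl h1, Finset.sum_add_distrib, Finset.sum_mul]
  ring

lemma frontier_affine_aux {f : ℝ → ℝ} {u v c d z : ℝ}
    (hf : ∀ x ∈ Set.Ioo u v, f x = c * x + d)
    (hz : z ∈ Set.Ioo u v) (hfr : z ∈ frontier {x | 0 < f x}) :
    c ≠ 0 ∧ c * z + d = 0 := by
  have hcl : z ∈ closure {x | 0 < f x} := hfr.1
  have hni : z ∉ interior {x | 0 < f x} := hfr.2
  have hIoo : IsOpen (Set.Ioo u v) := isOpen_Ioo
  have hcont : Continuous (fun x : ℝ => c * x + d) :=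
    (continuous_const.mul continuous_id).add continuous_const
  have key1 : ¬ 0 < c * z + d := by
    intro hp
    apply hni
    refine mem_interior.mpr ⟨Set.Ioo u v ∩ {x | 0 < c * x + d}, ?_, ?_, hz, hp⟩
    · rintro x ⟨hx1, hx2⟩; exact Set.mem_setOf.mpr (by rw [hf x hx1]; exact hx2)
    · exact hIoo.inter (isOpen_lt continuous_const hcont)
  have key2 : ¬ c * z + d < 0 := by
    intro hn
    obtain ⟨w, hw1, hw2⟩ := mem_closure_iff.mp hcl (Set.Ioo u v ∩ {x | c * x + d < 0})
      (hIoo.inter (isOpen_lt hcont continuous_const)) ⟨hz, hn⟩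
    rw [Set.mem_setOf_eq, hf w hw1.1] at hw2
    exact absurd hw2 (not_lt.mpr hw1.2.le)
  have heq : c * z + d = 0 := le_antisymm (not_lt.mp key1) (not_lt.mp key2)
  refine ⟨?_, heq⟩
  intro hc0
  subst hc0
  have hd : d = 0 := by linarith
  obtain ⟨w, hw1, hw2⟩ := mem_closure_iff.mp hcl (Set.Ioo u v) hIoo hz
  rw [Set.mem_setOf_eq, hf w hw1, hd] at hw2
  linarith

lemma PWS.relu_comp {S : Set ℝ} (hS : S.Finite) {f : ℝ → ℝ} (hf : PWS S f) :
    ∃ Z : Set ℝ, Z.Finite ∧ Z.ncard ≤ S.ncard + 1 ∧ PWS (S ∪ Z) (fun t => relu (f t)) := by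
  classical
  set U : Set ℝ := {x | 0 < f x} with hU
  set Z : Set ℝ := frontier U \ S with hZdef
  set φ : ℝ → Option ℝ :=
    fun z => if h : (S ∩ Set.Iio z).Nonempty then some (sSup (S ∩ Set.Iio z)) else none with hφ
  have key : ∀ z₁ ∈ Z, ∀ z₂ ∈ Z, z₁ < z₂ → φ z₁ ≠ φ z₂ := by
    intro z₁ hz₁ z₂ hz₂ hlt heq
    have hv : ∃ v, z₂ < v ∧ ∀ y ∈ S, z₂ < y → v ≤ y := by
      by_cases h : (S ∩ Set.Ioi z₂).Nonempty
      · exact ⟨sInf (S ∩ Set.Ioi z₂), (h.csInf_mem (hS.inter_of_left _)).2,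
          fun y hy hy2 => csInf_le (hS.inter_of_left _).bddBelow ⟨hy, hy2⟩⟩
      · exact ⟨z₂ + 1, by linarith, fun y hy hy2 => absurd ⟨hy, hy2⟩ (fun hmem => h ⟨y, hmem⟩)⟩
    obtain ⟨v, hv1, hv2⟩ := hv
    have hu : ∃ u, u < z₁ ∧ ∀ y ∈ S, y < z₂ → y ≤ u := by
      by_cases h : (S ∩ Set.Iio z₂).Nonempty
      · have h1 : (S ∩ Set.Iio z₁).Nonempty := by
          by_contra hne
          rw [hφ] at heq; simp only [dif_pos h, dif_neg hne] at heq
          exact absurd heq (by simp)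
        have heq2 : sSup (S ∩ Set.Iio z₁) = sSup (S ∩ Set.Iio z₂) := by
          rw [hφ] at heq; simpa only [dif_pos h, dif_pos h1, Option.some_inj] using heq
        refine ⟨sSup (S ∩ Set.Iio z₂), ?_,
          fun y hy hy2 => le_csSup (hS.inter_of_left _).bddAbove ⟨hy, hy2⟩⟩
        rw [← heq2]
        exact (h1.csSup_mem (hS.inter_of_left _)).2
      · exact ⟨z₁ - 1, by linarith, fun y hy hy2 => absurd ⟨hy, hy2⟩ (fun hmem => h ⟨y, hmem⟩)⟩
    obtain ⟨u, hu1, hu2⟩ := hu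
    have hdisj : Set.Ioo u v ∩ S = ∅ := by
      rw [Set.eq_empty_iff_forall_notMem]
      rintro y ⟨⟨hy1, hy2⟩, hyS⟩
      rcases lt_trichotomy y z₂ with h | h | h
      · exact absurd (hu2 y hyS h) (not_le.mpr hy1)
      · exact hz₂.2 (h ▸ hyS)
      · exact absurd (hv2 y hyS h) (not_le.mpr hy2)
    obtain ⟨c, d, hcd⟩ := hf u v hdisj
    have h1 := frontier_affine_aux hcd ⟨hu1, hlt.trans hv1⟩ hz₁.1
    have h2 := frontier_affine_aux hcd ⟨hu1.trans hlt, hv1⟩ hz₂.1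
    have : z₁ = z₂ := mul_left_cancel₀ h1.1 (by linarith [h1.2, h2.2])
    exact absurd this (ne_of_lt hlt)
  have hinj : Set.InjOn φ Z := by
    intro a ha b hb heq
    by_contra hne
    rcases Ne.lt_or_gt hne with h | h
    · exact key a ha b hb h heq
    · exact key b hb a ha h heq.symm
  have hmap : ∀ z ∈ Z, φ z ∈ insert none (Option.some '' S) := by
    intro z _
    rw [hφ]; dsimp only
    split_ifs with h
    · exact Set.mem_insert_of_mem _ ⟨sSup (S ∩ Set.Iio z), (h.csSup_mem (hS.inter_of_left _)).1, rfl⟩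
    · exact Set.mem_insert _ _
  have htfin : (insert none (Option.some '' S) : Set (Option ℝ)).Finite := (hS.image _).insert _
  have hZfin : Z.Finite := Set.Finite.of_finite_image
    (htfin.subset (by rintro _ ⟨z, hz, rfl⟩; exact hmap z hz)) hinj
  have hZcard : Z.ncard ≤ S.ncard + 1 := by
    calc Z.ncard ≤ (insert none (Option.some '' S) : Set (Option ℝ)).ncard :=
          Set.ncard_le_ncard_of_injOn φ hmap hinj htfin
      _ ≤ (Option.some '' S).ncard + 1 := Set.ncard_insert_le _ _
      _ = S.ncard + 1 := by rw [Set.ncard_image_of_injective _ (Option.some_injective ℝ)]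
  refine ⟨Z, hZfin, hZcard, ?_⟩
  intro a b hab
  have habS : Set.Ioo a b ∩ S = ∅ := by
    rw [Set.eq_empty_iff_forall_notMem] at hab ⊢
    exact fun x hx => hab x ⟨hx.1, Or.inl hx.2⟩
  obtain ⟨c, d, hcd⟩ := hf a b habS
  by_cases hall : ∀ x ∈ Set.Ioo a b, 0 < c * x + d
  · refine ⟨c, d, fun x hx => ?_⟩
    show relu (f x) = c * x + d
    rw [hcd x hx]
    exact relu_of_nonneg (le_of_lt (hall x hx))
  by_cases hall2 : ∀ x ∈ Set.Ioo a b, c * x + d ≤ 0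
  · refine ⟨0, 0, fun x hx => ?_⟩
    show relu (f x) = 0 * x + 0
    rw [hcd x hx, relu_of_nonpos (hall2 x hx)]; ring
  · exfalso
    push_neg at hall hall2
    obtain ⟨x₁, hx₁, hx₁n⟩ := hall
    obtain ⟨x₂, hx₂, hx₂p⟩ := hall2
    have hc : c ≠ 0 := by
      intro h0; subst h0; rw [zero_mul, zero_add] at hx₁n hx₂p; linarith
    set z := -d / c with hzdef
    have hz0 : c * z + d = 0 := by rw [hzdef]; field_simp; ring
    have hzmem : z ∈ Set.Ioo a b := by
      rcases lt_or_gt_of_ne hc with hneg | hpos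
      · constructor
        · nlinarith [hx₂.1, hx₂.2]
        · nlinarith [hx₁.1, hx₁.2]
      · constructor
        · nlinarith [hx₁.1, hx₁.2]
        · nlinarith [hx₂.1, hx₂.2]
    have hzfr : z ∈ frontier U := by
      constructor
      · rw [mem_closure_iff]
        intro O hO hzO
        obtain ⟨ε, hε, hball⟩ := Metric.isOpen_iff.mp (hO.inter isOpen_Ioo)
          z ⟨hzO, hzmem⟩
        set w := z + (if 0 < c then (1:ℝ) else -1) * (ε/2) with hwdef
        have hs : 0 < (if 0 < c then (1:ℝ) else -1) * c := by
          split_ifs with h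
          · simpa using h
          · have hcneg : c < 0 := lt_of_le_of_ne (not_lt.mp h) hc
            nlinarith
        have hwball : w ∈ Metric.ball z ε := by
          rw [Metric.mem_ball, Real.dist_eq, hwdef]
          have e1 : z + (if 0 < c then (1:ℝ) else -1) * (ε/2) - z
              = (if 0 < c then (1:ℝ) else -1) * (ε/2) := by ring
          rw [e1, abs_mul]
          have e2 : |(if 0 < c then (1:ℝ) else -1)| = 1 := by split_ifs <;> simp
          rw [e2, one_mul, abs_of_pos (by linarith)]
          linarith
        have hwmem := hball hwball
        refine ⟨w, hwmem.1, ?_⟩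
        rw [hU, Set.mem_setOf_eq, hcd w hwmem.2]
        have e3 : c * w + d = (if 0 < c then (1:ℝ) else -1) * c * (ε/2) + (c*z+d) := by
          rw [hwdef]; ring
        rw [e3, hz0, add_zero]
        exact mul_pos hs (by linarith)
      · intro h
        have : z ∈ U := interior_subset h
        rw [hU, Set.mem_setOf_eq, hcd z hzmem] at this
        linarith
    have : z ∈ Set.Ioo a b ∩ (S ∪ Z) := ⟨hzmem, Or.inr ⟨hzfr, fun hzS =>
      (Set.eq_empty_iff_forall_notMem.mp habS z) ⟨hzmem, hzS⟩⟩⟩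
    rw [hab] at this
    exact this
lemma ncard_iUnion_fin_le {w : ℕ} (Z : Fin w → Set ℝ) (hf : ∀ i, (Z i).Finite) (k : ℕ)
    (hk : ∀ i, (Z i).ncard ≤ k) : (⋃ i, Z i).Finite ∧ (⋃ i, Z i).ncard ≤ w * k := by
  induction w with
  | zero => simp
  | succ w ih =>
    have hsplit : (⋃ i : Fin (w+1), Z i) = Z 0 ∪ ⋃ i : Fin w, Z i.succ := by
      ext x
      simp only [Set.mem_iUnion, Set.mem_union]
      constructor
      · rintro ⟨i, hi⟩
        rcases Fin.eq_zero_or_eq_succ i with h | ⟨j, h⟩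
        · exact Or.inl (h ▸ hi)
        · exact Or.inr ⟨j, h ▸ hi⟩
      · rintro (h | ⟨j, hj⟩)
        · exact ⟨0, h⟩
        · exact ⟨j.succ, hj⟩
    obtain ⟨ihf, ihc⟩ := ih (fun i => Z i.succ) (fun i => hf _) (fun i => hk _)
    constructor
    · rw [hsplit]; exact (hf 0).union ihf
    · rw [hsplit]
      calc (Z 0 ∪ ⋃ i : Fin w, Z i.succ).ncard
          ≤ (Z 0).ncard + (⋃ i : Fin w, Z i.succ).ncard := Set.ncard_union_le _ _
        _ ≤ k + w * k := add_le_add (hk 0) ihc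
        _ = (w+1) * k := by ring

lemma pws_layer {S : Set ℝ} (hS : S.Finite) {n w : ℕ} {γ : ℝ → Fin n → ℝ}
    (hγ : ∀ j, PWS S (fun t => γ t j)) {f₀ : (Fin n → ℝ) → Fin w → ℝ} (hf : IsAffineMap f₀) :
    ∃ S' : Set ℝ, S'.Finite ∧ S'.ncard + 1 ≤ (w+1) * (S.ncard+1) ∧
      ∀ i, PWS S' (fun t => relu (f₀ (γ t) i)) := by
  obtain ⟨A, b, hAb⟩ := hf
  have hpre : ∀ i, PWS S (fun t => f₀ (γ t) i) := by
    intro i a p hap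
    obtain ⟨c, d, hcd⟩ := PWS.affine_comb hγ (fun j => A i j) (b i) a p hap
    refine ⟨c, d, fun x hx => ?_⟩
    show f₀ (γ x) i = c * x + d
    rw [hAb (γ x) i]; exact hcd x hx
  choose Z hZf hZc hZp using fun i => PWS.relu_comp hS (hpre i)
  obtain ⟨hUf, hUc⟩ := ncard_iUnion_fin_le Z hZf (S.ncard + 1) hZc
  refine ⟨S ∪ ⋃ i, Z i, hS.union hUf, ?_, fun i => (hZp i).mono ?_⟩
  · calc (S ∪ ⋃ i, Z i).ncard + 1 ≤ (S.ncard + (⋃ i, Z i).ncard) + 1 :=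
        Nat.add_le_add_right (Set.ncard_union_le _ _) 1
      _ ≤ S.ncard + w * (S.ncard + 1) + 1 := by omega
      _ = (w+1) * (S.ncard+1) := by ring
  · exact Set.union_subset_union_right S (Set.subset_iUnion Z i)

lemma computes_pws {n : ℕ} {ws : List ℕ} {m : ℕ} {F : (Fin n → ℝ) → Fin m → ℝ}
    (hF : ComputesA relu n ws m F) :
    ∀ (S : Set ℝ), S.Finite → ∀ (γ : ℝ → Fin n → ℝ), (∀ j, PWS S (fun t => γ t j)) →
    ∃ S' : Set ℝ, S'.Finite ∧ S'.ncard + 1 ≤ (S.ncard + 1) * (ws.map (· + 1)).prod ∧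
      ∀ i, PWS S' (fun t => F (γ t) i) := by
  induction hF with
  | nil f hfa =>
    intro S hS γ hγ
    obtain ⟨A, b, hAb⟩ := hfa
    refine ⟨S, hS, by simp, fun i => ?_⟩
    intro a p hap
    obtain ⟨c, d, hcd⟩ := PWS.affine_comb hγ (fun j => A i j) (b i) a p hap
    refine ⟨c, d, fun x hx => ?_⟩
    show f (γ x) i = c * x + d
    rw [hAb (γ x) i]; exact hcd x hx
  | @cons n w m ws f₀ g hfa hg ih =>
    intro S hS γ hγ
    obtain ⟨S₁, h1f, h1c, h1p⟩ := pws_layer hS hγ hfa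
    obtain ⟨S₂, h2f, h2c, h2p⟩ := ih S₁ h1f (fun t i => relu (f₀ (γ t) i)) h1p
    refine ⟨S₂, h2f, ?_, fun i => h2p i⟩
    calc S₂.ncard + 1 ≤ (S₁.ncard + 1) * (ws.map (· + 1)).prod := h2c
      _ ≤ ((w+1) * (S.ncard+1)) * (ws.map (· + 1)).prod := Nat.mul_le_mul_right _ h1c
      _ = (S.ncard + 1) * ((w :: ws).map (· + 1)).prod := by
          rw [List.map_cons, List.prod_cons]; ring

lemma relu_continuous : Continuous relu := continuous_id.max continuous_const

lemma affine_continuous {n m : ℕ} {f : (Fin n → ℝ) → Fin m → ℝ} (hf : IsAffineMap f) :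
    Continuous f := by
  obtain ⟨A, b, hAb⟩ := hf
  have hfe : f = fun x i => (∑ j, A i j * x j) + b i := by
    funext x i; exact hAb x i
  rw [hfe]
  exact continuous_pi fun i =>
    (continuous_finset_sum _ fun j _ => continuous_const.mul (continuous_apply j)).add
      continuous_const

lemma computes_continuous {n : ℕ} {ws : List ℕ} {m : ℕ} {F : (Fin n → ℝ) → Fin m → ℝ}
    (hF : ComputesA relu n ws m F) : Continuous F := by
  induction hF with
  | nil f hfa => exact affine_continuous hfa
  | cons f₀ g hfa hg ih =>
    exact ih.comp (continuous_pi fun i =>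
      relu_continuous.comp ((continuous_apply i).comp (affine_continuous hfa)))
open MeasureTheory in
lemma sum_setIntegral_le {ι : Type} (s : Finset ι) (U : ι → Set ℝ) (A : Set ℝ) (h : ℝ → ℝ)
    (hU : ∀ i ∈ s, MeasurableSet (U i)) (hUA : ∀ i ∈ s, U i ⊆ A)
    (hdisj : (s : Set ι).Pairwise (Function.onFun Disjoint U))
    (hint : IntegrableOn h A) (hpos : ∀ x, 0 ≤ h x) :
    ∑ i ∈ s, ∫ x in U i, h x ≤ ∫ x in A, h x := by
  rw [← MeasureTheory.integral_biUnion_finset s hU hdisj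
    (fun i hi => hint.mono_set (hUA i hi))]
  exact MeasureTheory.setIntegral_mono_set hint (MeasureTheory.ae_of_all _ hpos)
    (HasSubset.Subset.eventuallyLE (Set.iUnion₂_subset hUA))

open MeasureTheory in
lemma setIntegral_Ioo_split {h : ℝ → ℝ} {p q r : ℝ} (hpq : p ≤ q) (hqr : q ≤ r)
    (hint : IntegrableOn h (Set.Ioo p r)) (hpos : ∀ x, 0 ≤ h x) :
    (∫ x in Set.Ioo p q, h x) + (∫ x in Set.Ioo q r, h x) ≤ ∫ x in Set.Ioo p r, h x := by
  have hs1 : Set.Ioo p q ⊆ Set.Ioo p r := Set.Ioo_subset_Ioo le_rfl hqr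
  have hs2 : Set.Ioo q r ⊆ Set.Ioo p r := Set.Ioo_subset_Ioo hpq le_rfl
  rw [← MeasureTheory.setIntegral_union (Set.Ioo_disjoint_Ioo.mpr (by simp [hpq, hqr, min_le_iff, le_max_iff, le_refl, true_or])) measurableSet_Ioo
    (hint.mono_set hs1) (hint.mono_set hs2)]
  exact MeasureTheory.setIntegral_mono_set hint (MeasureTheory.ae_of_all _ hpos)
    (HasSubset.Subset.eventuallyLE (Set.union_subset hs1 hs2))

open intervalIntegral in
lemma integral_affine (c d a b : ℝ) (hab : a ≤ b) :
    ∫ x in Set.Ioo a b, (c * x + d) = c * (b^2 - a^2)/2 + d * (b - a) := by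
  rw [← MeasureTheory.integral_Ioc_eq_integral_Ioo, ← intervalIntegral.integral_of_le hab]
  have i1 : IntervalIntegrable (fun x : ℝ => c * x) MeasureTheory.volume a b :=
    (continuous_const.mul continuous_id).intervalIntegrable _ _
  rw [intervalIntegral.integral_add i1 intervalIntegrable_const,
    intervalIntegral.integral_const_mul, integral_id, intervalIntegral.integral_const]
  rw [smul_eq_mul]; ring

open MeasureTheory in
lemma tooth_bound {f g : ℝ → ℝ} {cf df a δ : ℝ} (hδ : 0 < δ)
    (hf : ∀ x ∈ Set.Ioo a (a+2*δ), f x = cf * x + df)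
    (hg1 : ∀ x ∈ Set.Ioo a (a+δ), g x = (x - a)/δ)
    (hg2 : ∀ x ∈ Set.Ioo (a+δ) (a+2*δ), g x = (a + 2*δ - x)/δ)
    (hcf : Continuous f) (hcg : Continuous g) :
    δ/2 ≤ ∫ x in Set.Ioo a (a+2*δ), |f x - g x| := by
  have hint : IntegrableOn (fun x => |f x - g x|) (Set.Icc a (a+2*δ)) :=
    ((hcf.sub hcg).abs).integrableOn_Icc
  have hintIoo : ∀ p q : ℝ, IntegrableOn (fun x => |f x - g x|) (Set.Ioo p q) :=
    fun p q => ((hcf.sub hcg).abs).integrableOn_Icc.mono_set Set.Ioo_subset_Icc_self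
  have hintfg : ∀ p q : ℝ, IntegrableOn (fun x => f x - g x) (Set.Ioo p q) :=
    fun p q => (hcf.sub hcg).integrableOn_Icc.mono_set Set.Ioo_subset_Icc_self
  have hintgf : ∀ p q : ℝ, IntegrableOn (fun x => g x - f x) (Set.Ioo p q) :=
    fun p q => (hcg.sub hcf).integrableOn_Icc.mono_set Set.Ioo_subset_Icc_self
  have habs0 : ∫ x in Set.Ioo a (a+δ/2), (f x - g x) ≤ ∫ x in Set.Ioo a (a+δ/2), |f x - g x| :=
    integral_mono (hintfg _ _) (hintIoo _ _) (fun x => le_abs_self _)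
  have habs1 : ∫ x in Set.Ioo (a+δ/2) (a+δ), (g x - f x)
      ≤ ∫ x in Set.Ioo (a+δ/2) (a+δ), |f x - g x| :=
    integral_mono (hintgf _ _) (hintIoo _ _) (fun x => by rw [abs_sub_comm]; exact le_abs_self _)
  have habs2 : ∫ x in Set.Ioo (a+δ) (a+3*δ/2), (g x - f x)
      ≤ ∫ x in Set.Ioo (a+δ) (a+3*δ/2), |f x - g x| :=
    integral_mono (hintgf _ _) (hintIoo _ _) (fun x => by rw [abs_sub_comm]; exact le_abs_self _)
  have habs3 : ∫ x in Set.Ioo (a+3*δ/2) (a+2*δ), (f x - g x)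
      ≤ ∫ x in Set.Ioo (a+3*δ/2) (a+2*δ), |f x - g x| :=
    integral_mono (hintfg _ _) (hintIoo _ _) (fun x => le_abs_self _)
  have hval0 : ∫ x in Set.Ioo a (a+δ/2), (f x - g x)
      = (cf - 1/δ) * ((a+δ/2)^2 - a^2)/2 + (df + a/δ) * ((a+δ/2) - a) := by
    rw [MeasureTheory.setIntegral_congr_fun measurableSet_Ioo
      (g := fun x => (cf - 1/δ) * x + (df + a/δ)) ?_]
    · exact integral_affine _ _ _ _ (by linarith)
    · intro x hx
      show f x - g x = _
      rw [hf x ⟨hx.1, by linarith [hx.2]⟩, hg1 x ⟨hx.1, by linarith [hx.2]⟩]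
      field_simp; ring
  have hval1 : ∫ x in Set.Ioo (a+δ/2) (a+δ), (g x - f x)
      = (1/δ - cf) * ((a+δ)^2 - (a+δ/2)^2)/2 + (-(a/δ) - df) * ((a+δ) - (a+δ/2)) := by
    rw [MeasureTheory.setIntegral_congr_fun measurableSet_Ioo
      (g := fun x => (1/δ - cf) * x + (-(a/δ) - df)) ?_]
    · exact integral_affine _ _ _ _ (by linarith)
    · intro x hx
      show g x - f x = _
      rw [hf x ⟨by linarith [hx.1], by linarith [hx.2]⟩, hg1 x ⟨by linarith [hx.1], hx.2⟩]
      field_simp; ring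
  have hval2 : ∫ x in Set.Ioo (a+δ) (a+3*δ/2), (g x - f x)
      = (-(1/δ) - cf) * ((a+3*δ/2)^2 - (a+δ)^2)/2 + (a/δ + 2 - df) * ((a+3*δ/2) - (a+δ)) := by
    rw [MeasureTheory.setIntegral_congr_fun measurableSet_Ioo
      (g := fun x => (-(1/δ) - cf) * x + (a/δ + 2 - df)) ?_]
    · exact integral_affine _ _ _ _ (by linarith)
    · intro x hx
      show g x - f x = _
      rw [hf x ⟨by linarith [hx.1], by linarith [hx.2]⟩, hg2 x ⟨hx.1, by linarith [hx.2]⟩]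
      field_simp; ring
  have hval3 : ∫ x in Set.Ioo (a+3*δ/2) (a+2*δ), (f x - g x)
      = (cf + 1/δ) * ((a+2*δ)^2 - (a+3*δ/2)^2)/2 + (df - a/δ - 2) * ((a+2*δ) - (a+3*δ/2)) := by
    rw [MeasureTheory.setIntegral_congr_fun measurableSet_Ioo
      (g := fun x => (cf + 1/δ) * x + (df - a/δ - 2)) ?_]
    · exact integral_affine _ _ _ _ (by linarith)
    · intro x hx
      show f x - g x = _
      rw [hf x ⟨by linarith [hx.1], hx.2⟩, hg2 x ⟨by linarith [hx.1], hx.2⟩]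
      field_simp; ring
  have hsplit1 : (∫ x in Set.Ioo a (a+δ/2), |f x - g x|)
      + (∫ x in Set.Ioo (a+δ/2) (a+δ), |f x - g x|) ≤ ∫ x in Set.Ioo a (a+δ), |f x - g x| :=
    setIntegral_Ioo_split (by linarith) (by linarith) (hintIoo _ _) (fun x => abs_nonneg _)
  have hsplit2 : (∫ x in Set.Ioo (a+δ) (a+3*δ/2), |f x - g x|)
      + (∫ x in Set.Ioo (a+3*δ/2) (a+2*δ), |f x - g x|)
      ≤ ∫ x in Set.Ioo (a+δ) (a+2*δ), |f x - g x| :=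
    setIntegral_Ioo_split (by linarith) (by linarith) (hintIoo _ _) (fun x => abs_nonneg _)
  have hsplit3 : (∫ x in Set.Ioo a (a+δ), |f x - g x|)
      + (∫ x in Set.Ioo (a+δ) (a+2*δ), |f x - g x|) ≤ ∫ x in Set.Ioo a (a+2*δ), |f x - g x| :=
    setIntegral_Ioo_split (by linarith) (by linarith) (hintIoo _ _) (fun x => abs_nonneg _)
  have hkey : ((cf - 1/δ) * ((a+δ/2)^2 - a^2)/2 + (df + a/δ) * ((a+δ/2) - a))
      + ((1/δ - cf) * ((a+δ)^2 - (a+δ/2)^2)/2 + (-(a/δ) - df) * ((a+δ) - (a+δ/2)))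
      + ((-(1/δ) - cf) * ((a+3*δ/2)^2 - (a+δ)^2)/2 + (a/δ + 2 - df) * ((a+3*δ/2) - (a+δ)))
      + ((cf + 1/δ) * ((a+2*δ)^2 - (a+3*δ/2)^2)/2 + (df - a/δ - 2) * ((a+2*δ) - (a+3*δ/2)))
      = δ/2 := by
    field_simp
    ring
  linarith [habs0, habs1, habs2, habs3, hsplit1, hsplit2, hsplit3,
    hval0, hval1, hval2, hval3]
lemma hfun_continuous : Continuous hfun := by
  unfold hfun
  have c1 : Continuous fun x : ℝ => max 0 (1 - 3*x) :=
    continuous_const.max (continuous_const.sub (continuous_const.mul continuous_id))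
  have c2 : Continuous fun x : ℝ => max 0 (3*x - 1) :=
    continuous_const.max ((continuous_const.mul continuous_id).sub continuous_const)
  have c3 : Continuous fun x : ℝ => max 0 (6*x - 4) :=
    continuous_const.max ((continuous_const.mul continuous_id).sub continuous_const)
  exact ((continuous_const.sub c1).sub c2).add c3

lemma hfun_iter_continuous (K : ℕ) : Continuous (hfun^[K]) := by
  induction K with
  | zero => exact continuous_id
  | succ K ih => rw [Function.iterate_succ]; exact ih.comp hfun_continuous

set_option maxHeartbeats 2000000 in
theorem stmt_13' (L : ℕ) (hL : 2 ≤ L) :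
    ∃ G : (Fin 1 → ℝ) → Fin 1 → ℝ,
      ComputesAB relu 6 1 (List.replicate (L ^ 2) 3) 1 G ∧
      (∀ x : ℝ, G (fun _ => x) 0 = hfun^[L ^ 2] x) ∧
      ∀ w : Fin L → ℕ, (∀ i, w i < 3 ^ (L - 1) - 1) →
        ∀ f : (Fin 1 → ℝ) → Fin 1 → ℝ, Computes 1 (List.ofFn w) 1 f →
          (1 : ℝ) / 9 ≤ ∫ x in Set.Icc (0:ℝ) 1, |f (fun _ => x) 0 - hfun^[L ^ 2] x| := by
  classical
  have hK4 : 4 ≤ L ^ 2 := by nlinarith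
  obtain ⟨G, hG1, hG2⟩ := outer_net (L ^ 2) (by omega)
  refine ⟨G, hG1, hG2, ?_⟩
  intro w hw f hf
  set K := L ^ 2 with hKdef
  set g : ℝ → ℝ := hfun^[K] with hgdef
  set fn : ℝ → ℝ := fun t => f (fun _ => t) 0 with hfndef
  have hfc : Continuous f := computes_continuous hf
  have hfnc : Continuous fn :=
    (continuous_apply (0 : Fin 1)).comp (hfc.comp (continuous_pi fun _ => continuous_id))
  have hgc : Continuous g := hfun_iter_continuous K
  -- piecewise structure of fn
  obtain ⟨S, hSf, hScard, hSp⟩ := computes_pws hf ∅ Set.finite_empty (fun t _ => t)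
    (fun j a b _ => ⟨1, 0, fun x _ => by ring⟩)
  have hSp0 : PWS S fn := hSp 0
  -- counting bound : S.ncard + 1 ≤ 3 ^ ((L-1)*L)
  have hB : S.ncard + 1 ≤ 3 ^ ((L-1)*L) := by
    have h1 : ((List.ofFn w).map (· + 1)).prod = ∏ i, (w i + 1) := by
      rw [List.map_ofFn, List.prod_ofFn]; rfl
    have h2 : ∏ i, (w i + 1) ≤ ∏ _i : Fin L, (3^(L-1) - 1) :=
      Finset.prod_le_prod' (fun i _ => by have := hw i; omega)
    have h3 : ∏ _i : Fin L, (3^(L-1) - 1) = (3^(L-1) - 1)^L := by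
      rw [Finset.prod_const, Finset.card_univ, Fintype.card_fin]
    have h30 : (3:ℕ) ≤ 3^(L-1) := by
      calc (3:ℕ) = 3^1 := (pow_one 3).symm
      _ ≤ 3^(L-1) := Nat.pow_le_pow_right (by norm_num) (by omega)
    have h4 : (3^(L-1) - 1)^L < (3^(L-1))^L :=
      Nat.pow_lt_pow_left (by omega) (by omega)
    have h5 : ((3:ℕ)^(L-1))^L = 3^((L-1)*L) := (pow_mul 3 (L-1) L).symm
    have h6 := hScard
    rw [h1] at h6
    simp only [Set.ncard_empty, zero_add, one_mul] at h6
    omega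
  have hKsplit : (L-1)*L + L = K := by
    have e1 : (L - 1 + 1) * L = (L-1)*L + L := Nat.succ_mul _ _
    have e2 : L - 1 + 1 = L := by omega
    rw [e2] at e1
    rw [hKdef, sq]
    omega
  -- real quantities
  set X : ℝ := 3^K with hX
  have hXpos : (0:ℝ) < X := by rw [hX]; positivity
  set δ : ℝ := 1/X with hδdef
  have hδpos : 0 < δ := by rw [hδdef]; positivity
  set A : ℕ → ℝ := fun i => 2*(i:ℝ)*δ with hA
  set T : ℕ := (3^K - 1)/2 with hT
  have hodd : Odd ((3:ℕ)^K) := Odd.pow ⟨1, by norm_num⟩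
  have hT2 : 2 * T + 1 = 3^K := by
    obtain ⟨t, ht⟩ := hodd
    omega
  set good : Finset ℕ := (Finset.range T).filter
    (fun i => Set.Ioo (A i) (A i + 2*δ) ∩ S = ∅) with hgood
  -- per-tooth bound for good teeth
  have htooth : ∀ i ∈ good, δ/2 ≤ ∫ x in Set.Ioo (A i) (A i + 2*δ), |fn x - g x| := by
    intro i hi
    rw [hgood, Finset.mem_filter] at hi
    obtain ⟨hiT, hiS⟩ := hi
    rw [Finset.mem_range] at hiT
    obtain ⟨cf, df, hcd⟩ := hSp0 (A i) (A i + 2*δ) hiS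
    have h2i2 : (2*i+2 : ℕ) ≤ 3^K := by omega
    have hcast : ((3:ℕ)^K : ℝ) = X := by rw [hX]; push_cast; rfl
    have hXδ : X * δ = 1 := by rw [hδdef]; field_simp
    have h3K0 : (3:ℝ)^K ≠ 0 := by positivity
    apply tooth_bound hδpos hcd ?hg1 ?hg2 hfnc hgc
    case hg1 =>
      intro x hx
      have hj : (2*i : ℕ) < 3^K := by omega
      have h5 : 2*(i:ℝ)*δ < x := hx.1
      have h6 : x < 2*(i:ℝ)*δ + δ := hx.2
      have hb1 : ((2*i : ℕ) : ℝ)/3^K ≤ x := by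
        rw [← hX]
        push_cast
        rw [div_le_iff₀ hXpos]
        calc 2*(i:ℝ) = 2*(i:ℝ)*δ*X := by rw [hδdef]; try field_simp
          
          _ ≤ x * X := mul_le_mul_of_nonneg_right h5.le hXpos.le
      have hb2 : x ≤ (((2*i : ℕ) : ℝ)+1)/3^K := by
        rw [← hX]
        push_cast
        rw [le_div_iff₀ hXpos]
        calc x * X ≤ (2*(i:ℝ)*δ + δ) * X := mul_le_mul_of_nonneg_right h6.le hXpos.le
          _ = 2*(i:ℝ) + 1 := by rw [hδdef, hX]; field_simp; try ring
      have hval := hfun_iter K (2*i) hj x hb1 hb2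
      rw [if_pos ⟨i, by ring⟩] at hval
      show g x = _
      rw [hgdef, hval]
      try simp only [hA]
      rw [hδdef, hX]
      push_cast
      field_simp
      try ring
    case hg2 =>
      intro x hx
      have h5 : 2*(i:ℝ)*δ + δ < x := hx.1
      have h6 : x < 2*(i:ℝ)*δ + 2*δ := hx.2
      have hj : (2*i+1 : ℕ) < 3^K := by omega
      have hb1 : ((2*i+1 : ℕ) : ℝ)/3^K ≤ x := by
        rw [← hX]
        push_cast
        rw [div_le_iff₀ hXpos]
        calc 2*(i:ℝ) + 1 = (2*(i:ℝ)*δ + δ)*X := by rw [hδdef, hX]; field_simp; try ring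
          _ ≤ x * X := mul_le_mul_of_nonneg_right h5.le hXpos.le
      have hb2 : x ≤ (((2*i+1 : ℕ) : ℝ)+1)/3^K := by
        rw [← hX]
        push_cast
        rw [le_div_iff₀ hXpos]
        calc x * X ≤ (2*(i:ℝ)*δ + 2*δ) * X := mul_le_mul_of_nonneg_right h6.le hXpos.le
          _ = 2*(i:ℝ) + 1 + 1 := by rw [hδdef, hX]; field_simp; try ring
      have hval := hfun_iter K (2*i+1) hj x hb1 hb2
      have hnotev : ¬ Even (2*i+1) := by simp [Nat.even_add_one, parity_simps]
      rw [if_neg hnotev] at hval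
      show g x = _
      rw [hgdef, hval]
      try simp only [hA]
      rw [hδdef, hX]
      push_cast
      field_simp
      try ring
  -- sum over good teeth
  have hmain : (good.card : ℝ) * (δ/2) ≤ ∫ x in Set.Icc (0:ℝ) 1, |fn x - g x| := by
    have hintA : MeasureTheory.IntegrableOn (fun x => |fn x - g x|) (Set.Icc (0:ℝ) 1) :=
      ((hfnc.sub hgc).abs).integrableOn_Icc
    have hsub : ∀ i ∈ good, Set.Ioo (A i) (A i + 2*δ) ⊆ Set.Icc (0:ℝ) 1 := by
      intro i hi x hx
      rw [hgood, Finset.mem_filter, Finset.mem_range] at hi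
      have h2i2 : (2*(i:ℝ)+2) ≤ X := by
        have : (2*i+2 : ℕ) ≤ 3^K := by omega
        calc (2*(i:ℝ)+2) = ((2*i+2 : ℕ) : ℝ) := by push_cast; ring
          _ ≤ ((3^K : ℕ) : ℝ) := by exact_mod_cast this
          _ = X := by rw [hX]; push_cast; rfl
      have hXδ : X * δ = 1 := by rw [hδdef]; field_simp
      constructor
      · have h1 : 2*(i:ℝ)*δ < x := hx.1
        nlinarith [(Nat.cast_nonneg i : (0:ℝ) ≤ i), hδpos]
      · have h1 : x < 2*(i:ℝ)*δ + 2*δ := hx.2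
        nlinarith [hδpos]
    have hdisj : (good : Set ℕ).Pairwise
        (Function.onFun Disjoint (fun i => Set.Ioo (A i) (A i + 2*δ))) := by
      intro i _ j _ hij
      rcases Nat.lt_or_ge i j with h | h
      · apply Set.disjoint_left.mpr
        intro x hx hx'
        have h1 : x < 2*(i:ℝ)*δ + 2*δ := hx.2
        have h2 : 2*(j:ℝ)*δ < x := hx'.1
        have : (i:ℝ) + 1 ≤ (j:ℝ) := by exact_mod_cast h
        nlinarith [hδpos]
      · have h' : j < i := by omega
        apply Set.disjoint_right.mpr
        intro x hx hx'
        have h1 : x < 2*(j:ℝ)*δ + 2*δ := hx.2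
        have h2 : 2*(i:ℝ)*δ < x := hx'.1
        have : (j:ℝ) + 1 ≤ (i:ℝ) := by exact_mod_cast h'
        nlinarith [hδpos]
    have hsum := sum_setIntegral_le good (fun i => Set.Ioo (A i) (A i + 2*δ)) (Set.Icc 0 1)
      (fun x => |fn x - g x|) (fun i _ => measurableSet_Ioo) hsub hdisj hintA
      (fun x => abs_nonneg _)
    calc (good.card : ℝ) * (δ/2) = ∑ _i ∈ good, δ/2 := by
          rw [Finset.sum_const, nsmul_eq_mul]
      _ ≤ ∑ i ∈ good, ∫ x in Set.Ioo (A i) (A i + 2*δ), |fn x - g x| :=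
          Finset.sum_le_sum htooth
      _ ≤ _ := hsum
  -- cardinality of good
  have hgc2 : T ≤ good.card + S.ncard := by
    set bad : Finset ℕ := (Finset.range T).filter
      (fun i => ¬ (Set.Ioo (A i) (A i + 2*δ) ∩ S = ∅)) with hbad
    have hpart : good.card + bad.card = T := by
      rw [hgood, hbad, Finset.card_filter_add_card_filter_not, Finset.card_range]
    have hbadle : bad.card ≤ S.ncard := by
      have hchoose : ∀ i : ℕ, ∃ x : ℝ, i ∈ bad → x ∈ Set.Ioo (A i) (A i + 2*δ) ∩ S := by
        intro i
        by_cases hi : i ∈ bad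
        · have hne : (Set.Ioo (A i) (A i + 2*δ) ∩ S).Nonempty := by
            rw [hbad, Finset.mem_filter] at hi
            exact Set.nonempty_iff_ne_empty.mpr hi.2
          obtain ⟨x, hx⟩ := hne
          exact ⟨x, fun _ => hx⟩
        · exact ⟨0, fun h => absurd h hi⟩
      choose σ hσ using hchoose
      have hcard : S.ncard = hSf.toFinset.card := Set.ncard_eq_toFinset_card _ hSf
      rw [hcard]
      apply Finset.card_le_card_of_injOn σ
      · intro i hi
        rw [Finset.mem_coe, Set.Finite.mem_toFinset]
        exact (hσ i hi).2
      · intro i hi j hj hij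
        by_contra hne
        have key : ∀ i' j' : ℕ, i' < j' → σ i' = σ j' → i' ∈ bad → j' ∈ bad → False := by
          intro i' j' hlt heq hi' hj'
          have h1 : σ i' < 2*(i':ℝ)*δ + 2*δ := (hσ i' hi').1.2
          have h2 : 2*(j':ℝ)*δ < σ j' := (hσ j' hj').1.1
          have hc : (i':ℝ) + 1 ≤ (j':ℝ) := by exact_mod_cast hlt
          rw [heq] at h1
          nlinarith [hδpos]
        have hib : i ∈ bad := Finset.mem_coe.mp hi
        have hjb : j ∈ bad := Finset.mem_coe.mp hj
        rcases Nat.lt_or_ge i j with h | h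
        · exact key i j h hij hib hjb
        · have h' : j < i := by omega
          exact key j i h' hij.symm hjb hib
    omega
  -- final numeric computation
  have hTR : 2*(T:ℝ) + 1 = X := by
    rw [hX]
    exact_mod_cast hT2
  have hBR : (S.ncard : ℝ) ≤ 3^((L-1)*L) - 1 := by
    have h1 : (S.ncard + 1 : ℕ) ≤ 3^((L-1)*L) := hB
    have h2 := (Nat.cast_le (α := ℝ)).mpr h1
    push_cast at h2
    linarith
  have hYX : (3:ℝ)^((L-1)*L) * 3^L = X := by
    rw [hX, ← pow_add, hKsplit]
  have h3L : (9:ℝ) ≤ 3^L := by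
    calc (9:ℝ) = 3^2 := by norm_num
    _ ≤ 3^L := pow_le_pow_right₀ (by norm_num) hL
  have hgoodR : (X + 1)/2 - 3^((L-1)*L) ≤ (good.card : ℝ) := by
    have h1 : (T:ℝ) ≤ (good.card : ℝ) + (S.ncard:ℝ) := by exact_mod_cast hgc2
    linarith
  have hfinal : (1:ℝ)/9 ≤ (good.card : ℝ) * (δ/2) := by
    have hY : (0:ℝ) < 3^((L-1)*L) := by positivity
    have hYle : 9 * (3:ℝ)^((L-1)*L) ≤ X := by nlinarith [hYX, h3L, hY]
    have h2 : (0:ℝ) < 2*X := by linarith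
    have h3 : (good.card : ℝ) * (δ/2) = (good.card : ℝ) / (2*X) := by
      rw [hδdef]; ring
    rw [h3, le_div_iff₀ h2]
    linarith [hgoodR, hYle, hXpos]
  calc (1:ℝ)/9 ≤ (good.card : ℝ) * (δ/2) := hfinal
    _ ≤ ∫ x in Set.Icc (0:ℝ) 1, |fn x - g x| := hmain

/-- the `L²`-fold composition of `hfun` is computed by a ReLU network with
`L²` hidden layers of width 3 and coefficients bounded by 6, and cannot be `L¹([0,1])`
approximated within `1/9` by any ReLU network of depth `L` and width `< 3^{L-1} - 1`. -/
theorem stmt_13 (L : ℕ) (hL : 2 ≤ L) :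
    ∃ G : (Fin 1 → ℝ) → Fin 1 → ℝ,
      ComputesAB relu 6 1 (List.replicate (L ^ 2) 3) 1 G ∧
      (∀ x : ℝ, G (fun _ => x) 0 = hfun^[L ^ 2] x) ∧
      ∀ w : Fin L → ℕ, (∀ i, w i < 3 ^ (L - 1) - 1) →
        ∀ f : (Fin 1 → ℝ) → Fin 1 → ℝ, Computes 1 (List.ofFn w) 1 f →
          (1 : ℝ) / 9 ≤ ∫ x in Set.Icc (0:ℝ) 1, |f (fun _ => x) 0 - hfun^[L ^ 2] x| := by
  exact stmt_13' L hL
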